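/- Let m < M be real numbers, let φ : [m, M] → ℝ be a function of bounded variation with φ(m) = 0, and let g : [m, M] → ℝ be continuous and of bounded variation. Then for any decomposition g = g₁ − g₂ on [m, M] with g₁, g₂ : [m, M] → ℝ monotone nondecreasing and continuous, the Riemann–Stieltjes integral of φ against g satisfies | ∫_{(m,M]} φ dμ₁ − ∫_{(m,M]} φ dμ₂ | ≤ 2 · Var_{[m,M]}(φ) · sup_{t ∈ [m,M]} |g(t)|, where μ₁ and μ₂ are the Lebesgue–Stieltjes measures associated with g₁ and g₂. -/

import Mathlib

/-!
Statement 8 (Riemann–Stieltjes integral bound):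
Let `m < M`, let `φ` be of bounded variation on `[m,M]` with `φ(m) = 0`, and let `g` be
continuous and of bounded variation on `[m,M]`. Then for any decomposition `g = g₁ - g₂`
on `[m,M]` with `g₁, g₂` monotone nondecreasing and continuous on `[m,M]`, and with
`μ₁, μ₂` the associated Lebesgue–Stieltjes measures (giving mass `gᵢ(t) - gᵢ(s)` to each
`(s,t] ⊆ (m,M]`):
`| ∫_{(m,M]} φ dμ₁ - ∫_{(m,M]} φ dμ₂ | ≤ 2 · Var_{[m,M]}(φ) · sup_{t ∈ [m,M]} |g(t)|`.
-/

open MeasureTheory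

open scoped ENNReal

section AuxStieltjes
open Set

private lemma aux_atomless (m M : ℝ) (G : ℝ → ℝ)
    (hGcont : ContinuousOn G (Set.Icc m M))
    (μ : Measure ℝ)
    (hμ : ∀ s t : ℝ, m ≤ s → s ≤ t → t ≤ M →
      μ (Set.Ioc s t) = ENNReal.ofReal (G t - G s)) :
    ∀ t ∈ Set.Ioc m M, μ {t} = 0 := by
  intro t ht
  have hkey : ∀ ε : ℝ, 0 < ε → μ {t} ≤ ENNReal.ofReal ε := by
    intro ε hε
    have htI : t ∈ Set.Icc m M := ⟨ht.1.le, ht.2⟩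
    have hc : ContinuousWithinAt G (Set.Icc m M) t := hGcont t htI
    rw [Metric.continuousWithinAt_iff] at hc
    obtain ⟨δ, hδ, hδ'⟩ := hc ε hε
    set s := max m (t - δ/2) with hs
    have hst : s < t := max_lt ht.1 (by linarith)
    have hsI : s ∈ Set.Icc m M := ⟨le_max_left _ _, hst.le.trans ht.2⟩
    have hdist : dist s t < δ := by
      have h1 : t - δ/2 ≤ s := le_max_right _ _
      rw [Real.dist_eq, abs_of_nonpos (by linarith)]
      linarith
    have hGst : G t - G s ≤ ε := by
      have h2 := hδ' hsI hdist
      rw [Real.dist_eq] at h2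
      have h3 := abs_le.1 h2.le
      linarith [h3.1]
    calc μ {t} ≤ μ (Set.Ioc s t) := by
          apply measure_mono
          intro x hx
          simp only [Set.mem_singleton_iff] at hx
          subst hx
          exact ⟨hst, le_rfl⟩
      _ = ENNReal.ofReal (G t - G s) := hμ s t hsI.1 hst.le ht.2
      _ ≤ ENNReal.ofReal ε := ENNReal.ofReal_le_ofReal hGst
  refine le_antisymm ?_ zero_le
  refine ENNReal.le_of_forall_pos_le_add (fun ε hε _ => ?_)
  rw [zero_add]
  have := hkey ε (by exact_mod_cast hε)
  rwa [ENNReal.ofReal_coe_nnreal] at this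

private lemma aux_fubini (m M : ℝ) (hmM : m < M) (F : StieltjesFunction ℝ) (G : ℝ → ℝ)
    (hGmono : MonotoneOn G (Set.Icc m M)) (hGcont : ContinuousOn G (Set.Icc m M))
    (μ : Measure ℝ)
    (hμ : ∀ s t : ℝ, m ≤ s → s ≤ t → t ≤ M →
      μ (Set.Ioc s t) = ENNReal.ofReal (G t - G s))
    (hatom : ∀ t ∈ Set.Ioc m M, μ {t} = 0) :
    ∫ x in Set.Ioc m M, (F x - F m) ∂μ = ∫ y in Set.Ioc m M, (G M - G y) ∂F.measure := by
  haveI h1 : IsFiniteMeasure (μ.restrict (Set.Ioc m M)) :=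
    ⟨by rw [Measure.restrict_apply_univ, hμ m M le_rfl hmM.le le_rfl]
        exact ENNReal.ofReal_lt_top⟩
  haveI h2 : IsFiniteMeasure (F.measure.restrict (Set.Ioc m M)) :=
    ⟨by rw [Measure.restrict_apply_univ, F.measure_Ioc]; exact ENNReal.ofReal_lt_top⟩
  have hL : ∫ x in Set.Ioc m M, (F x - F m) ∂μ
      = (∫⁻ x in Set.Ioc m M, ENNReal.ofReal (F x - F m) ∂μ).toReal := by
    apply integral_eq_lintegral_of_nonneg_ae
    · filter_upwards [ae_restrict_mem measurableSet_Ioc] with x hx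
      exact sub_nonneg.2 (F.mono hx.1.le)
    · exact (F.mono.measurable.sub measurable_const).aestronglyMeasurable
  have hR : ∫ y in Set.Ioc m M, (G M - G y) ∂F.measure
      = (∫⁻ y in Set.Ioc m M, ENNReal.ofReal (G M - G y) ∂F.measure).toReal := by
    apply integral_eq_lintegral_of_nonneg_ae
    · filter_upwards [ae_restrict_mem measurableSet_Ioc] with y hy
      exact sub_nonneg.2 (hGmono ⟨hy.1.le, hy.2⟩ ⟨hmM.le, le_rfl⟩ hy.2)
    · exact (continuousOn_const.sub (hGcont.mono Set.Ioc_subset_Icc_self)).aestronglyMeasurable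
        measurableSet_Ioc
  have hswap : ∫⁻ x in Set.Ioc m M, ENNReal.ofReal (F x - F m) ∂μ
      = ∫⁻ y in Set.Ioc m M, ENNReal.ofReal (G M - G y) ∂F.measure := by
    have hmf : AEMeasurable (Function.uncurry fun x y => if y ≤ x then (1:ℝ≥0∞) else 0)
        ((μ.restrict (Set.Ioc m M)).prod (F.measure.restrict (Set.Ioc m M))) := by
      apply Measurable.aemeasurable
      have : Function.uncurry (fun x y => if y ≤ x then (1:ℝ≥0∞) else 0)
          = fun p : ℝ × ℝ => if p.2 ≤ p.1 then (1:ℝ≥0∞) else 0 := rfl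
      rw [this]
      exact Measurable.ite (measurableSet_le measurable_snd measurable_fst)
        measurable_const measurable_const
    have step1 : ∫⁻ x in Set.Ioc m M, ENNReal.ofReal (F x - F m) ∂μ
        = ∫⁻ x, (∫⁻ y, (if y ≤ x then (1:ℝ≥0∞) else 0)
            ∂(F.measure.restrict (Set.Ioc m M))) ∂(μ.restrict (Set.Ioc m M)) := by
      apply setLIntegral_congr_fun measurableSet_Ioc
      intro x hx
      dsimp only
      have e1 : (fun y => if y ≤ x then (1:ℝ≥0∞) else 0)
          = Set.indicator (Set.Iic x) (fun _ => (1:ℝ≥0∞)) := by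
        funext y; simp [Set.indicator_apply, Set.mem_Iic]
      rw [e1, lintegral_indicator_const measurableSet_Iic, one_mul,
        Measure.restrict_apply measurableSet_Iic]
      have e2 : Set.Iic x ∩ Set.Ioc m M = Set.Ioc m x := by
        ext y
        simp only [Set.mem_inter_iff, Set.mem_Iic, Set.mem_Ioc]
        constructor
        · rintro ⟨h1, h2, _⟩; exact ⟨h2, h1⟩
        · rintro ⟨h1, h2⟩; exact ⟨h2, h1, h2.trans hx.2⟩
      rw [e2, F.measure_Ioc]
    have step2 := lintegral_lintegral_swap hmf
    have step3 : ∫⁻ y, (∫⁻ x, (if y ≤ x then (1:ℝ≥0∞) else 0)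
          ∂(μ.restrict (Set.Ioc m M))) ∂(F.measure.restrict (Set.Ioc m M))
        = ∫⁻ y in Set.Ioc m M, ENNReal.ofReal (G M - G y) ∂F.measure := by
      apply setLIntegral_congr_fun measurableSet_Ioc
      intro y hy
      dsimp only
      have e1 : (fun x => if y ≤ x then (1:ℝ≥0∞) else 0)
          = Set.indicator (Set.Ici y) (fun _ => (1:ℝ≥0∞)) := by
        funext x; simp [Set.indicator_apply, Set.mem_Ici]
      rw [e1, lintegral_indicator_const measurableSet_Ici, one_mul,
        Measure.restrict_apply measurableSet_Ici]
      have e2 : Set.Ici y ∩ Set.Ioc m M = Set.Icc y M := by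
        ext x
        simp only [Set.mem_inter_iff, Set.mem_Ici, Set.mem_Ioc, Set.mem_Icc]
        constructor
        · rintro ⟨h1, _, h3⟩; exact ⟨h1, h3⟩
        · rintro ⟨h1, h2⟩; exact ⟨h1, hy.1.trans_le h1, h2⟩
      have e3 : Set.Icc y M = {y} ∪ Set.Ioc y M := by
        ext x
        simp only [Set.mem_Icc, Set.mem_union, Set.mem_singleton_iff, Set.mem_Ioc]
        constructor
        · rintro ⟨h1, h2⟩
          rcases eq_or_lt_of_le h1 with h | h
          · exact Or.inl h.symm
          · exact Or.inr ⟨h, h2⟩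
        · rintro (rfl | ⟨h1, h2⟩)
          · exact ⟨le_rfl, hy.2⟩
          · exact ⟨h1.le, h2⟩
      rw [e2, e3, measure_union (by simp [Set.disjoint_singleton_left]) measurableSet_Ioc,
        hatom y hy, zero_add, hμ y M hy.1.le hy.2 le_rfl]
    rw [step1, step2, step3]
  rw [hL, hR, hswap]

end AuxStieltjes



theorem stieltjes_integral_BV_bound
    (m M : ℝ) (hmM : m < M)
    (φ g g₁ g₂ : ℝ → ℝ)
    (hφBV : BoundedVariationOn φ (Set.Icc m M))
    (hφm : φ m = 0)
    (hgcont : ContinuousOn g (Set.Icc m M))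
    (hgBV : BoundedVariationOn g (Set.Icc m M))
    (hg₁mono : MonotoneOn g₁ (Set.Icc m M))
    (hg₂mono : MonotoneOn g₂ (Set.Icc m M))
    (hg₁cont : ContinuousOn g₁ (Set.Icc m M))
    (hg₂cont : ContinuousOn g₂ (Set.Icc m M))
    (hdecomp : ∀ t ∈ Set.Icc m M, g t = g₁ t - g₂ t)
    (μ₁ μ₂ : Measure ℝ)
    (hμ₁ : ∀ s t : ℝ, m ≤ s → s ≤ t → t ≤ M →
      μ₁ (Set.Ioc s t) = ENNReal.ofReal (g₁ t - g₁ s))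
    (hμ₂ : ∀ s t : ℝ, m ≤ s → s ≤ t → t ≤ M →
      μ₂ (Set.Ioc s t) = ENNReal.ofReal (g₂ t - g₂ s)) :
    |(∫ x in Set.Ioc m M, φ x ∂μ₁) - ∫ x in Set.Ioc m M, φ x ∂μ₂|
      ≤ 2 * (eVariationOn φ (Set.Icc m M)).toReal * ⨆ t : Set.Icc m M, |g t| := by
  have hmS : m ∈ Set.Icc m M := ⟨le_rfl, hmM.le⟩
  have hMS : M ∈ Set.Icc m M := ⟨hmM.le, le_rfl⟩
  have hLBV : LocallyBoundedVariationOn φ (Set.Icc m M) := hφBV.locallyBoundedVariationOn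
  -- clamping function
  set c : ℝ → ℝ := fun x => max m (min x M) with hcdef
  have hcmem : ∀ x, c x ∈ Set.Icc m M :=
    fun x => ⟨le_max_left _ _, max_le hmM.le (min_le_right _ _)⟩
  have hcmono : Monotone c := fun x y hxy =>
    max_le_max le_rfl (min_le_min_right _ hxy)
  have hceq : ∀ x ∈ Set.Icc m M, c x = x := by
    intro x hx
    simp only [hcdef]
    rw [min_eq_left hx.2, max_eq_right hx.1]
  have hcm : c m = m := hceq m hmS
  have hcM : c M = M := hceq M hMS
  have hcge : ∀ x, M ≤ x → c x = M := by
    intro x hx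
    simp only [hcdef]
    rw [min_eq_right hx, max_eq_right hmM.le]
  -- the variation function
  set V : ℝ → ℝ := fun x => variationOnFromTo φ (Set.Icc m M) m (c x) with hVdef
  have hVm : V m = 0 := by
    simp only [hVdef, hcm, variationOnFromTo.self]
  have hVtot : V M = (eVariationOn φ (Set.Icc m M)).toReal := by
    simp only [hVdef, hcM]
    rw [variationOnFromTo.eq_of_le φ _ hmM.le, Set.inter_self]
  -- increment inequality
  have hinc : ∀ x y : ℝ, x ≤ y → |φ (c y) - φ (c x)| ≤ V y - V x := by
    intro x y hxy
    have h1 : c x ≤ c y := hcmono hxy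
    have hcx := hcmem x
    have hcy := hcmem y
    have hadd : V x + variationOnFromTo φ (Set.Icc m M) (c x) (c y) = V y :=
      variationOnFromTo.add hLBV hmS hcx hcy
    have h2 : |φ (c y) - φ (c x)| ≤ variationOnFromTo φ (Set.Icc m M) (c x) (c y) := by
      rw [variationOnFromTo.eq_of_le φ _ h1]
      have hfin : eVariationOn φ (Set.Icc m M ∩ Set.Icc (c x) (c y)) ≠ ⊤ :=
        hLBV (c x) (c y) hcx hcy
      have h4 : ENNReal.ofReal |φ (c y) - φ (c x)|
          ≤ eVariationOn φ (Set.Icc m M ∩ Set.Icc (c x) (c y)) := by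
        rw [← Real.dist_eq, ← edist_dist]
        exact eVariationOn.edist_le φ ⟨hcy, h1, le_rfl⟩ ⟨hcx, le_rfl, h1⟩
      calc |φ (c y) - φ (c x)| = (ENNReal.ofReal |φ (c y) - φ (c x)|).toReal := by
            rw [ENNReal.toReal_ofReal (abs_nonneg _)]
        _ ≤ _ := ENNReal.toReal_mono hfin h4
    linarith
  -- Jordan decomposition into monotone parts
  set p : ℝ → ℝ := fun x => (V x + φ (c x)) / 2 with hpdef
  set n : ℝ → ℝ := fun x => (V x - φ (c x)) / 2 with hndef
  have hpmono : Monotone p := by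
    intro x y hxy
    have h := abs_le.1 (hinc x y hxy)
    simp only [hpdef]
    linarith [h.1]
  have hnmono : Monotone n := by
    intro x y hxy
    have h := abs_le.1 (hinc x y hxy)
    simp only [hndef]
    linarith [h.2]
  have hpm : p m = 0 := by simp [hpdef, hVm, hcm, hφm]
  have hnm : n m = 0 := by simp [hndef, hVm, hcm, hφm]
  set FP := hpmono.stieltjesFunction with hFPdef
  set FN := hnmono.stieltjesFunction with hFNdef
  have hFPM : FP M = p M := by
    refine le_antisymm ?_ (hpmono.le_rightLim le_rfl)
    have h := hpmono.rightLim_le (show M < M + 1 by linarith)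
    have hpc : p (M + 1) = p M := by
      simp only [hpdef, hVdef]
      rw [hcge (M + 1) (by linarith), hcM]
    rw [hpc] at h
    exact h
  have hFNM : FN M = n M := by
    refine le_antisymm ?_ (hnmono.le_rightLim le_rfl)
    have h := hnmono.rightLim_le (show M < M + 1 by linarith)
    have hnc : n (M + 1) = n M := by
      simp only [hndef, hVdef]
      rw [hcge (M + 1) (by linarith), hcM]
    rw [hnc] at h
    exact h
  have hFPm : 0 ≤ FP m := by
    have := hpmono.le_rightLim (le_refl m)
    rw [hpm] at this
    exact this
  have hFNm : 0 ≤ FN m := by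
    have := hnmono.le_rightLim (le_refl m)
    rw [hnm] at this
    exact this
  have hsum : FP M + FN M = (eVariationOn φ (Set.Icc m M)).toReal := by
    rw [hFPM, hFNM, ← hVtot]
    simp only [hpdef, hndef]
    ring
  -- atomlessness
  have hA1 := aux_atomless m M g₁ hg₁cont μ₁ hμ₁
  have hA2 := aux_atomless m M g₂ hg₂cont μ₂ hμ₂
  -- finite restricted measures
  haveI hfin1 : IsFiniteMeasure (μ₁.restrict (Set.Ioc m M)) :=
    ⟨by rw [Measure.restrict_apply_univ, hμ₁ m M le_rfl hmM.le le_rfl]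
        exact ENNReal.ofReal_lt_top⟩
  haveI hfin2 : IsFiniteMeasure (μ₂.restrict (Set.Ioc m M)) :=
    ⟨by rw [Measure.restrict_apply_univ, hμ₂ m M le_rfl hmM.le le_rfl]
        exact ENNReal.ofReal_lt_top⟩
  -- a.e. equality of φ with FP - FN on (m, M]
  set D : Set ℝ := {x | ¬ContinuousAt p x} ∪ {x | ¬ContinuousAt n x} with hDdef
  have hDcount : D.Countable :=
    (hpmono.countable_not_continuousAt).union (hnmono.countable_not_continuousAt)
  have hgood : ∀ x ∈ Set.Ioc m M, x ∉ D → φ x = FP x - FN x := by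
    intro x hx hxD
    have hcp : ContinuousAt p x := by
      by_contra h; exact hxD (Or.inl h)
    have hcn : ContinuousAt n x := by
      by_contra h; exact hxD (Or.inr h)
    have hne : (nhdsWithin x (Set.Ioi x)).NeBot := inferInstance
    have e1 : FP x = p x := by
      rw [hFPdef, hpmono.stieltjesFunction_eq]
      exact rightLim_eq_of_tendsto (hcp.tendsto.mono_left nhdsWithin_le_nhds)
    have e2 : FN x = n x := by
      rw [hFNdef, hnmono.stieltjesFunction_eq]
      exact rightLim_eq_of_tendsto (hcn.tendsto.mono_left nhdsWithin_le_nhds)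
    have hxS : x ∈ Set.Icc m M := ⟨hx.1.le, hx.2⟩
    rw [e1, e2]
    simp only [hpdef, hndef]
    rw [hceq x hxS]
    ring
  have haeD : ∀ (μ : Measure ℝ), (∀ t ∈ Set.Ioc m M, μ {t} = 0) →
      φ =ᵐ[μ.restrict (Set.Ioc m M)] fun x => FP x - FN x := by
    intro μ hatom
    have hDnull : μ.restrict (Set.Ioc m M) D = 0 := by
      rw [Measure.restrict_apply' measurableSet_Ioc]
      have hcnt : (D ∩ Set.Ioc m M).Countable := hDcount.mono Set.inter_subset_left
      have : (⋃ x ∈ D ∩ Set.Ioc m M, {x}) = D ∩ Set.Ioc m M := Set.biUnion_of_singleton _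
      rw [← this, measure_biUnion_null_iff hcnt]
      intro x hx
      exact hatom x hx.2
    have hIocc : μ.restrict (Set.Ioc m M) (Set.Ioc m M)ᶜ = 0 := by
      rw [Measure.restrict_apply' measurableSet_Ioc, Set.compl_inter_self]
      exact measure_empty
    rw [Filter.EventuallyEq, ae_iff]
    refine measure_mono_null ?_ (by
      rw [← le_zero_iff]
      calc μ.restrict (Set.Ioc m M) (D ∪ (Set.Ioc m M)ᶜ)
          ≤ μ.restrict (Set.Ioc m M) D + μ.restrict (Set.Ioc m M) (Set.Ioc m M)ᶜ :=
            measure_union_le _ _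
        _ = 0 := by rw [hDnull, hIocc, add_zero])
    intro x hx
    simp only [Set.mem_setOf_eq] at hx
    by_contra hmem
    simp only [Set.mem_union, not_or] at hmem
    exact hx (hgood x (Set.notMem_compl_iff.1 hmem.2) hmem.1)
  -- integrability of the Stieltjes pieces
  have hintF : ∀ (F : StieltjesFunction ℝ) (μ : Measure ℝ), IsFiniteMeasure (μ.restrict (Set.Ioc m M)) →
      Integrable (fun x => F x - F m) (μ.restrict (Set.Ioc m M)) := by
    intro F μ hF
    refine Integrable.mono' (integrable_const (F M - F m))
      ((F.mono.measurable.sub measurable_const).aestronglyMeasurable) ?_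
    filter_upwards [ae_restrict_mem measurableSet_Ioc] with x hx
    rw [Real.norm_eq_abs, abs_of_nonneg (sub_nonneg.2 (F.mono hx.1.le))]
    exact sub_le_sub_right (F.mono hx.2) _
  -- splitting the integrals
  have hsplit : ∀ (μ : Measure ℝ) (G : ℝ → ℝ), IsFiniteMeasure (μ.restrict (Set.Ioc m M)) →
      MonotoneOn G (Set.Icc m M) →
      (∀ s t : ℝ, m ≤ s → s ≤ t → t ≤ M → μ (Set.Ioc s t) = ENNReal.ofReal (G t - G s)) →
      (∀ t ∈ Set.Ioc m M, μ {t} = 0) →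
      ∫ x in Set.Ioc m M, φ x ∂μ
        = (∫ x in Set.Ioc m M, (FP x - FP m) ∂μ) - (∫ x in Set.Ioc m M, (FN x - FN m) ∂μ)
          + (G M - G m) * (FP m - FN m) := by
    intro μ G hFinμ hGmono hμG hatom
    have hcong : ∫ x in Set.Ioc m M, φ x ∂μ
        = ∫ x in Set.Ioc m M, (FP x - FN x) ∂μ := integral_congr_ae (haeD μ hatom)
    rw [hcong]
    have e : (fun x => FP x - FN x)
        = fun x => ((FP x - FP m) - (FN x - FN m)) + (FP m - FN m) := by
      funext x; ring
    have hI : Integrable (fun x => (FP x - FP m) - (FN x - FN m)) (μ.restrict (Set.Ioc m M)) :=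
      (hintF FP μ hFinμ).sub (hintF FN μ hFinμ)
    rw [e, integral_add hI (integrable_const _),
      integral_sub (hintF FP μ hFinμ) (hintF FN μ hFinμ), setIntegral_const, measureReal_def,
      hμG m M le_rfl hmM.le le_rfl,
      ENNReal.toReal_ofReal (sub_nonneg.2 (hGmono hmS hMS hmM.le)), smul_eq_mul]
  have hsplit1 := hsplit μ₁ g₁ hfin1 hg₁mono hμ₁ hA1
  have hsplit2 := hsplit μ₂ g₂ hfin2 hg₂mono hμ₂ hA2
  -- Fubini (integration by parts)
  have hf11 := aux_fubini m M hmM FP g₁ hg₁mono hg₁cont μ₁ hμ₁ hA1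
  have hf12 := aux_fubini m M hmM FP g₂ hg₂mono hg₂cont μ₂ hμ₂ hA2
  have hf21 := aux_fubini m M hmM FN g₁ hg₁mono hg₁cont μ₁ hμ₁ hA1
  have hf22 := aux_fubini m M hmM FN g₂ hg₂mono hg₂cont μ₂ hμ₂ hA2
  -- combining the two measures into g
  have hintG : ∀ (F : StieltjesFunction ℝ) (G : ℝ → ℝ), MonotoneOn G (Set.Icc m M) →
      ContinuousOn G (Set.Icc m M) →
      Integrable (fun y => G M - G y) (F.measure.restrict (Set.Ioc m M)) := by
    intro F G hGmono hGcont
    haveI : IsFiniteMeasure (F.measure.restrict (Set.Ioc m M)) :=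
      ⟨by rw [Measure.restrict_apply_univ, F.measure_Ioc]; exact ENNReal.ofReal_lt_top⟩
    refine Integrable.mono' (integrable_const (G M - G m))
      ((continuousOn_const.sub (hGcont.mono Set.Ioc_subset_Icc_self)).aestronglyMeasurable
        measurableSet_Ioc) ?_
    filter_upwards [ae_restrict_mem measurableSet_Ioc] with y hy
    have hyS : y ∈ Set.Icc m M := ⟨hy.1.le, hy.2⟩
    rw [Real.norm_eq_abs, abs_of_nonneg (sub_nonneg.2 (hGmono hyS hMS hy.2))]
    exact sub_le_sub_left (hGmono hmS hyS hy.1.le) _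
  have hcomb : ∀ (F : StieltjesFunction ℝ),
      (∫ y in Set.Ioc m M, (g₁ M - g₁ y) ∂F.measure)
        - (∫ y in Set.Ioc m M, (g₂ M - g₂ y) ∂F.measure)
      = ∫ y in Set.Ioc m M, (g M - g y) ∂F.measure := by
    intro F
    rw [← integral_sub (hintG F g₁ hg₁mono hg₁cont) (hintG F g₂ hg₂mono hg₂cont)]
    apply setIntegral_congr_fun measurableSet_Ioc
    intro y hy
    have hyS : y ∈ Set.Icc m M := ⟨hy.1.le, hy.2⟩
    simp only
    rw [hdecomp M hMS, hdecomp y hyS]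
    ring
  -- the sup bound
  have hbd : ∀ t ∈ Set.Icc m M, |g t| ≤ ⨆ t : Set.Icc m M, |g t| := by
    intro t ht
    have hBdd : BddAbove (Set.range fun t : Set.Icc m M => |g ↑t|) := by
      obtain ⟨B, hB⟩ := isCompact_Icc.exists_bound_of_continuousOn hgcont
      refine ⟨B, ?_⟩
      rintro _ ⟨s, rfl⟩
      have := hB s s.2
      rwa [Real.norm_eq_abs] at this
    exact le_ciSup hBdd (⟨t, ht⟩ : Set.Icc m M)
  set C : ℝ := ⨆ t : Set.Icc m M, |g t| with hCdef
  have hC0 : 0 ≤ C := le_trans (abs_nonneg _) (hbd m hmS)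
  -- bounds on the two integrals
  have hbound : ∀ (F : StieltjesFunction ℝ),
      |∫ y in Set.Ioc m M, (g M - g y) ∂F.measure| ≤ (2 * C) * (F M - F m) := by
    intro F
    have h := norm_setIntegral_le_of_norm_le_const (μ := F.measure) (s := Set.Ioc m M)
      (C := 2 * C)
      (by rw [F.measure_Ioc]; exact ENNReal.ofReal_lt_top)
      (fun y hy => by
        rw [Real.norm_eq_abs]
        have h1 := hbd M hMS
        have h2 := hbd y ⟨hy.1.le, hy.2⟩
        calc |g M - g y| ≤ |g M| + |g y| := abs_sub _ _
          _ ≤ 2 * C := by linarith)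
    rw [Real.norm_eq_abs] at h
    rwa [measureReal_def, F.measure_Ioc, ENNReal.toReal_ofReal (sub_nonneg.2 (F.mono hmM.le))] at h
  have hboundP := hbound FP
  have hboundN := hbound FN
  -- assemble
  have hdg : (g₁ M - g₁ m) - (g₂ M - g₂ m) = g M - g m := by
    rw [hdecomp M hMS, hdecomp m hmS]; ring
  have hkey : (∫ x in Set.Ioc m M, φ x ∂μ₁) - ∫ x in Set.Ioc m M, φ x ∂μ₂
      = (∫ y in Set.Ioc m M, (g M - g y) ∂FP.measure)
        - (∫ y in Set.Ioc m M, (g M - g y) ∂FN.measure)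
        + (g M - g m) * (FP m - FN m) := by
    rw [hsplit1, hsplit2, hf11, hf12, hf21, hf22, ← hcomb FP, ← hcomb FN, ← hdg]
    ring
  rw [hkey]
  have t1 : |(∫ y in Set.Ioc m M, (g M - g y) ∂FP.measure)
      - (∫ y in Set.Ioc m M, (g M - g y) ∂FN.measure)
      + (g M - g m) * (FP m - FN m)|
      ≤ |∫ y in Set.Ioc m M, (g M - g y) ∂FP.measure|
        + |∫ y in Set.Ioc m M, (g M - g y) ∂FN.measure|
        + |g M - g m| * |FP m - FN m| := by
    calc _ ≤ |(∫ y in Set.Ioc m M, (g M - g y) ∂FP.measure)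
          - (∫ y in Set.Ioc m M, (g M - g y) ∂FN.measure)|
          + |(g M - g m) * (FP m - FN m)| := abs_add_le _ _
      _ ≤ _ := by
          rw [abs_mul]
          exact add_le_add_left (abs_sub _ _) _
  have h3 : |g M - g m| ≤ 2 * C := by
    have h1 := hbd M hMS
    have h2 := hbd m hmS
    calc |g M - g m| ≤ |g M| + |g m| := abs_sub _ _
      _ ≤ 2 * C := by linarith
  have h4 : |FP m - FN m| ≤ FP m + FN m := by
    calc |FP m - FN m| ≤ |FP m| + |FN m| := abs_sub _ _
      _ = FP m + FN m := by rw [abs_of_nonneg hFPm, abs_of_nonneg hFNm]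
  have h5 : |g M - g m| * |FP m - FN m| ≤ (2 * C) * (FP m + FN m) :=
    mul_le_mul h3 h4 (abs_nonneg _) (by linarith)
  calc |(∫ y in Set.Ioc m M, (g M - g y) ∂FP.measure)
      - (∫ y in Set.Ioc m M, (g M - g y) ∂FN.measure)
      + (g M - g m) * (FP m - FN m)|
      ≤ |∫ y in Set.Ioc m M, (g M - g y) ∂FP.measure|
        + |∫ y in Set.Ioc m M, (g M - g y) ∂FN.measure|
        + |g M - g m| * |FP m - FN m| := t1
    _ ≤ (2 * C) * (FP M - FP m) + (2 * C) * (FN M - FN m) + (2 * C) * (FP m + FN m) := by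
        exact add_le_add (add_le_add hboundP hboundN) h5
    _ = (2 * C) * (FP M + FN M) := by ring
    _ = 2 * (eVariationOn φ (Set.Icc m M)).toReal * C := by rw [hsum]; ring
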